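/- For all u, v, w ∈ ℝ⁷, φ₀(u, v, w)² + ¼‖χ₀(u, v, w)‖² = |u∧v∧w|², where |u∧v∧w|² denotes the Gram determinant det(g₀(aᵢ, aⱼ)) for (a₁, a₂, a₃) = (u, v, w). -/

import Mathlib

open scoped RealInnerProductSpace

noncomputable section

abbrev E7 : Type := EuclideanSpace ℝ (Fin 7)

/-- `dxⁱ ∧ dxʲ ∧ dxᵏ` evaluated on the triple `(u, v, w)`. -/
def triDet (u v w : E7) (i j k : Fin 7) : ℝ :=
  Matrix.det !![u i, u j, u k; v i, v j, v k; w i, w j, w k]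

/-- The standard G₂ 3-form `φ₀ = dx¹²³ + dx¹⁴⁵ + dx¹⁶⁷ + dx²⁴⁶ − dx²⁵⁷ − dx³⁴⁷ − dx³⁵⁶`
(here with 0-indexed coordinates). -/
def phi0 (u v w : E7) : ℝ :=
  triDet u v w 0 1 2 + triDet u v w 0 3 4 + triDet u v w 0 5 6 +
    triDet u v w 1 3 5 - triDet u v w 1 4 6 - triDet u v w 2 3 6 - triDet u v w 2 4 5

/-- `dxⁱ ∧ dxʲ ∧ dxᵏ ∧ dxˡ` evaluated on the quadruple `(u, v, w, x)`. -/
def quadDet (u v w x : E7) (i j k l : Fin 7) : ℝ :=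
  Matrix.det !![u i, u j, u k, u l; v i, v j, v k, v l;
                w i, w j, w k, w l; x i, x j, x k, x l]

/-- The 4-form `ψ₀ = −dx¹²⁴⁷ − dx¹²⁵⁶ − dx¹³⁴⁶ + dx¹³⁵⁷ + dx²³⁴⁵ + dx²³⁶⁷ + dx⁴⁵⁶⁷`
(here with 0-indexed coordinates). -/
def psi0 (u v w x : E7) : ℝ :=
  -quadDet u v w x 0 1 3 6 - quadDet u v w x 0 1 4 5 - quadDet u v w x 0 2 3 5 +
    quadDet u v w x 0 2 4 6 + quadDet u v w x 1 2 3 4 + quadDet u v w x 1 2 5 6 +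
    quadDet u v w x 3 4 5 6

theorem triDet_expand (u v w : E7) (i j k : Fin 7) : triDet u v w i j k =
    u i * (v j * w k) - u i * (v k * w j) - u j * (v i * w k) + u j * (v k * w i)
      + u k * (v i * w j) - u k * (v j * w i) := by
  simp [triDet, Matrix.det_fin_three]; ring

theorem quadDet_expand (u v w x : E7) (i j k l : Fin 7) : quadDet u v w x i j k l =
    u i * v j * w k * x l - u i * v j * w l * x k - u i * v k * w j * x l + u i * v k * w l * x j + u i * v l * w j * x k - u i * v l * w k * x j - u j * v i * w k * x l + u j * v i * w l * x k + u j * v k * w i * x l - u j * v k * w l * x i - u j * v l * w i * x k + u j * v l * w k * x i + u k * v i * w j * x l - u k * v i * w l * x j - u k * v j * w i * x l + u k * v j * w l * x i + u k * v l * w i * x j - u k * v l * w j * x i - u l * v i * w j * x k + u l * v i * w k * x j + u l * v j * w i * x k - u l * v j * w k * x i - u l * v k * w i * x j + u l * v k * w j * x i := by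
  simp [quadDet, Matrix.det_succ_row_zero, Fin.sum_univ_succ, Fin.succAbove]
  ring

set_option maxHeartbeats 4000000 in
set_option maxRecDepth 100000 in
/-- For all `u, v, w ∈ ℝ⁷`, `φ₀(u,v,w)² + ¼‖χ₀(u,v,w)‖² = |u∧v∧w|²`, where `|u∧v∧w|²`
is the Gram determinant and `χ₀` is determined by `g₀(u, ½χ₀(v,w,x)) = ψ₀(u,v,w,x)`. -/
theorem statement2 (chi : E7 → E7 → E7 → E7)
    (hchi : ∀ a b c d : E7, ⟪a, (1/2 : ℝ) • chi b c d⟫ = psi0 a b c d)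
    (u v w : E7) :
    phi0 u v w ^ 2 + (1/4 : ℝ) * ‖chi u v w‖ ^ 2 =
      Matrix.det !![⟪u, u⟫, ⟪u, v⟫, ⟪u, w⟫;
                    ⟪v, u⟫, ⟪v, v⟫, ⟪v, w⟫;
                    ⟪w, u⟫, ⟪w, v⟫, ⟪w, w⟫] := by
  have hc : ∀ i : Fin 7, chi u v w i = 2 * psi0 (EuclideanSpace.single i 1) u v w := by
    intro i
    have h := hchi (EuclideanSpace.single i 1) u v w
    rw [real_inner_smul_right, EuclideanSpace.inner_single_left] at h
    simp only [map_one, one_mul] at h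
    linarith
  have hn : ‖chi u v w‖ ^ 2 = ∑ i : Fin 7, chi u v w i * chi u v w i := by
    rw [← real_inner_self_eq_norm_sq, PiLp.inner_apply]
    simp [RCLike.inner_apply, sq]
  have hgram : Matrix.det !![⟪u, u⟫, ⟪u, v⟫, ⟪u, w⟫;
                    ⟪v, u⟫, ⟪v, v⟫, ⟪v, w⟫;
                    ⟪w, u⟫, ⟪w, v⟫, ⟪w, w⟫] = triDet u v w 0 1 2 ^ 2 + triDet u v w 0 1 3 ^ 2 + triDet u v w 0 1 4 ^ 2 + triDet u v w 0 1 5 ^ 2 + triDet u v w 0 1 6 ^ 2 + triDet u v w 0 2 3 ^ 2 + triDet u v w 0 2 4 ^ 2 + triDet u v w 0 2 5 ^ 2 + triDet u v w 0 2 6 ^ 2 + triDet u v w 0 3 4 ^ 2 + triDet u v w 0 3 5 ^ 2 + triDet u v w 0 3 6 ^ 2 + triDet u v w 0 4 5 ^ 2 + triDet u v w 0 4 6 ^ 2 + triDet u v w 0 5 6 ^ 2 + triDet u v w 1 2 3 ^ 2 + triDet u v w 1 2 4 ^ 2 + triDet u v w 1 2 5 ^ 2 + triDet u v w 1 2 6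 ^ 2 + triDet u v w 1 3 4 ^ 2 + triDet u v w 1 3 5 ^ 2 + triDet u v w 1 3 6 ^ 2 + triDet u v w 1 4 5 ^ 2 + triDet u v w 1 4 6 ^ 2 + triDet u v w 1 5 6 ^ 2 + triDet u v w 2 3 4 ^ 2 + triDet u v w 2 3 5 ^ 2 + triDet u v w 2 3 6 ^ 2 + triDet u v w 2 4 5 ^ 2 + triDet u v w 2 4 6 ^ 2 + triDet u v w 2 5 6 ^ 2 + triDet u v w 3 4 5 ^ 2 + triDet u v w 3 4 6 ^ 2 + triDet u v w 3 5 6 ^ 2 + triDet u v w 4 5 6 ^ 2 := by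
    simp only [triDet_expand]
    simp [-inner_self_eq_norm_sq_to_K, Matrix.det_fin_three, PiLp.inner_apply, RCLike.inner_apply, Fin.sum_univ_seven]
    ring
  have hpsi0 : psi0 (EuclideanSpace.single 0 1) u v w = -triDet u v w 1 3 6 - triDet u v w 1 4 5 - triDet u v w 2 3 5 + triDet u v w 2 4 6 := by
    simp [psi0, quadDet_expand, triDet_expand, EuclideanSpace.single_apply]
    ring
  have hpsi1 : psi0 (EuclideanSpace.single 1 1) u v w = triDet u v w 0 3 6 + triDet u v w 0 4 5 + triDet u v w 2 3 4 + triDet u v w 2 5 6 := by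
    simp [psi0, quadDet_expand, triDet_expand, EuclideanSpace.single_apply]
    ring
  have hpsi2 : psi0 (EuclideanSpace.single 2 1) u v w = triDet u v w 0 3 5 - triDet u v w 0 4 6 - triDet u v w 1 3 4 - triDet u v w 1 5 6 := by
    simp [psi0, quadDet_expand, triDet_expand, EuclideanSpace.single_apply]
    ring
  have hpsi3 : psi0 (EuclideanSpace.single 3 1) u v w = -triDet u v w 0 1 6 - triDet u v w 0 2 5 + triDet u v w 1 2 4 + triDet u v w 4 5 6 := by
    simp [psi0, quadDet_expand, triDet_expand, EuclideanSpace.single_apply]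
    ring
  have hpsi4 : psi0 (EuclideanSpace.single 4 1) u v w = -triDet u v w 0 1 5 + triDet u v w 0 2 6 - triDet u v w 1 2 3 - triDet u v w 3 5 6 := by
    simp [psi0, quadDet_expand, triDet_expand, EuclideanSpace.single_apply]
    ring
  have hpsi5 : psi0 (EuclideanSpace.single 5 1) u v w = triDet u v w 0 1 4 + triDet u v w 0 2 3 + triDet u v w 1 2 6 + triDet u v w 3 4 6 := by
    simp [psi0, quadDet_expand, triDet_expand, EuclideanSpace.single_apply]
    ring
  have hpsi6 : psi0 (EuclideanSpace.single 6 1) u v w = triDet u v w 0 1 3 - triDet u v w 0 2 4 - triDet u v w 1 2 5 - triDet u v w 3 4 5 := by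
    simp [psi0, quadDet_expand, triDet_expand, EuclideanSpace.single_apply]
    ring
  have hpl0 : -triDet u v w 0 1 2 * triDet u v w 0 3 4 + triDet u v w 0 1 3 * triDet u v w 0 2 4 - triDet u v w 0 1 4 * triDet u v w 0 2 3 = 0 := by
    simp only [triDet_expand]; ring
  have hpl1 : -triDet u v w 0 1 2 * triDet u v w 0 5 6 + triDet u v w 0 1 5 * triDet u v w 0 2 6 - triDet u v w 0 1 6 * triDet u v w 0 2 5 = 0 := by
    simp only [triDet_expand]; ring
  have hpl2 : -triDet u v w 0 1 2 * triDet u v w 1 3 5 + triDet u v w 0 1 3 * triDet u v w 1 2 5 - triDet u v w 0 1 5 * triDet u v w 1 2 3 = 0 := by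
    simp only [triDet_expand]; ring
  have hpl3 : -triDet u v w 0 1 2 * triDet u v w 1 4 6 + triDet u v w 0 1 4 * triDet u v w 1 2 6 - triDet u v w 0 1 6 * triDet u v w 1 2 4 = 0 := by
    simp only [triDet_expand]; ring
  have hpl4 : -triDet u v w 0 1 2 * triDet u v w 2 3 6 + triDet u v w 0 2 3 * triDet u v w 1 2 6 - triDet u v w 0 2 6 * triDet u v w 1 2 3 = 0 := by
    simp only [triDet_expand]; ring
  have hpl5 : -triDet u v w 0 1 2 * triDet u v w 2 4 5 + triDet u v w 0 2 4 * triDet u v w 1 2 5 - triDet u v w 0 2 5 * triDet u v w 1 2 4 = 0 := by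
    simp only [triDet_expand]; ring
  have hpl6 : -triDet u v w 0 3 4 * triDet u v w 0 5 6 + triDet u v w 0 3 5 * triDet u v w 0 4 6 - triDet u v w 0 3 6 * triDet u v w 0 4 5 = 0 := by
    simp only [triDet_expand]; ring
  have hpl7 : -triDet u v w 0 1 3 * triDet u v w 3 4 5 + triDet u v w 0 3 4 * triDet u v w 1 3 5 - triDet u v w 0 3 5 * triDet u v w 1 3 4 = 0 := by
    simp only [triDet_expand]; ring
  have hpl8 : -triDet u v w 0 2 3 * triDet u v w 3 4 6 + triDet u v w 0 3 4 * triDet u v w 2 3 6 - triDet u v w 0 3 6 * triDet u v w 2 3 4 = 0 := by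
    simp only [triDet_expand]; ring
  have hpl9 : -triDet u v w 0 1 4 * triDet u v w 3 4 6 + triDet u v w 0 3 4 * triDet u v w 1 4 6 - triDet u v w 0 4 6 * triDet u v w 1 3 4 = 0 := by
    simp only [triDet_expand]; ring
  have hpl10 : -triDet u v w 0 2 4 * triDet u v w 3 4 5 + triDet u v w 0 3 4 * triDet u v w 2 4 5 - triDet u v w 0 4 5 * triDet u v w 2 3 4 = 0 := by
    simp only [triDet_expand]; ring
  have hpl11 : -triDet u v w 0 1 5 * triDet u v w 3 5 6 + triDet u v w 0 3 5 * triDet u v w 1 5 6 - triDet u v w 0 5 6 * triDet u v w 1 3 5 = 0 := by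
    simp only [triDet_expand]; ring
  have hpl12 : -triDet u v w 0 2 5 * triDet u v w 4 5 6 + triDet u v w 0 4 5 * triDet u v w 2 5 6 - triDet u v w 0 5 6 * triDet u v w 2 4 5 = 0 := by
    simp only [triDet_expand]; ring
  have hpl13 : -triDet u v w 0 1 6 * triDet u v w 4 5 6 + triDet u v w 0 4 6 * triDet u v w 1 5 6 - triDet u v w 0 5 6 * triDet u v w 1 4 6 = 0 := by
    simp only [triDet_expand]; ring
  have hpl14 : -triDet u v w 0 2 6 * triDet u v w 3 5 6 + triDet u v w 0 3 6 * triDet u v w 2 5 6 - triDet u v w 0 5 6 * triDet u v w 2 3 6 = 0 := by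
    simp only [triDet_expand]; ring
  have hpl15 : -triDet u v w 1 3 4 * triDet u v w 1 5 6 + triDet u v w 1 3 5 * triDet u v w 1 4 6 - triDet u v w 1 3 6 * triDet u v w 1 4 5 = 0 := by
    simp only [triDet_expand]; ring
  have hpl16 : -triDet u v w 1 2 3 * triDet u v w 3 5 6 + triDet u v w 1 3 5 * triDet u v w 2 3 6 - triDet u v w 1 3 6 * triDet u v w 2 3 5 = 0 := by
    simp only [triDet_expand]; ring
  have hpl17 : -triDet u v w 1 2 4 * triDet u v w 4 5 6 + triDet u v w 1 4 5 * triDet u v w 2 4 6 - triDet u v w 1 4 6 * triDet u v w 2 4 5 = 0 := by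
    simp only [triDet_expand]; ring
  have hpl18 : -triDet u v w 1 2 5 * triDet u v w 3 4 5 + triDet u v w 1 3 5 * triDet u v w 2 4 5 - triDet u v w 1 4 5 * triDet u v w 2 3 5 = 0 := by
    simp only [triDet_expand]; ring
  have hpl19 : -triDet u v w 1 2 6 * triDet u v w 3 4 6 + triDet u v w 1 3 6 * triDet u v w 2 4 6 - triDet u v w 1 4 6 * triDet u v w 2 3 6 = 0 := by
    simp only [triDet_expand]; ring
  have hpl20 : -triDet u v w 2 3 4 * triDet u v w 2 5 6 + triDet u v w 2 3 5 * triDet u v w 2 4 6 - triDet u v w 2 3 6 * triDet u v w 2 4 5 = 0 := by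
    simp only [triDet_expand]; ring
  rw [hn, hgram]
  simp only [Fin.sum_univ_seven, hc, hpsi0, hpsi1, hpsi2, hpsi3, hpsi4, hpsi5, hpsi6, phi0]
  linear_combination -2 * hpl0 - 2 * hpl1 - 2 * hpl2 + 2 * hpl3 + 2 * hpl4 + 2 * hpl5 - 2 * hpl6 + 2 * hpl7 - 2 * hpl8 - 2 * hpl9 - 2 * hpl10 - 2 * hpl11 + 2 * hpl12 + 2 * hpl13 + 2 * hpl14 - 2 * hpl15 - 2 * hpl16 - 2 * hpl17 - 2 * hpl18 - 2 * hpl19 - 2 * hpl20
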